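/- arXiv:1906.01614 — 2 statements merged into one kernel-verified Lean document; each statement's English description precedes it below -/
import Mathlib

section
/- Let q ∈ (1,2]. Then for any Δ, Δ* ∈ ℝ^d, writing ξ = Δ − Δ*, one has ‖Δ‖_q² ≥ ‖Δ*‖_q² + D_q(Δ*)'ξ + (q−1)‖ξ‖_q², where D_q(Δ*) is the gradient of the map Δ ↦ ‖Δ‖_q² at Δ*. -/
open scoped RealInnerProductSpace
open Real Set Filter

/-- AM-GM step: for `p ≤ 0`, `t ∈ [0,1)`, `(1+t)^p + (1-t)^p ≥ 2`. -/
lemma aux_two_le {p t : ℝ} (hp : p ≤ 0) (ht0 : 0 ≤ t) (ht1 : t < 1) :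
    2 ≤ (1 + t) ^ p + (1 - t) ^ p := by
  have h1 : (0:ℝ) < 1 + t := by linarith
  have h2 : (0:ℝ) < 1 - t := by linarith
  have ha : 0 < (1 + t) ^ p := Real.rpow_pos_of_pos h1 p
  have hb : 0 < (1 - t) ^ p := Real.rpow_pos_of_pos h2 p
  have hprod : 1 ≤ (1 + t) ^ p * (1 - t) ^ p := by
    rw [← Real.mul_rpow h1.le h2.le]
    have hle : (1 + t) * (1 - t) ≤ 1 := by nlinarith
    exact Real.one_le_rpow_of_pos_of_le_one_of_nonpos (mul_pos h1 h2) hle hp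
  nlinarith [sq_nonneg ((1 + t) ^ p - (1 - t) ^ p), sq_nonneg ((1 + t) ^ p + (1 - t) ^ p - 2)]

/-- First derivative step: `(1+t)^(q-1) - (1-t)^(q-1) ≥ 2(q-1)t` on `[0,1)`. -/
lemma aux_phi {q : ℝ} (hq1 : 1 < q) (hq2 : q ≤ 2) {t : ℝ} (ht0 : 0 ≤ t) (ht1 : t < 1) :
    2 * (q - 1) * t ≤ (1 + t) ^ (q - 1) - (1 - t) ^ (q - 1) := by
  set φ : ℝ → ℝ := fun t => (1 + t) ^ (q - 1) - (1 - t) ^ (q - 1) - 2 * (q - 1) * t with hφ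
  have hderiv : ∀ x ∈ Ico (0:ℝ) 1,
      HasDerivAt φ ((q - 1) * ((1 + x) ^ (q - 2) + (1 - x) ^ (q - 2) - 2)) x := by
    intro x hx
    have h1 : (0:ℝ) < 1 + x := by linarith [hx.1]
    have h2 : (0:ℝ) < 1 - x := by linarith [hx.2]
    have d1 : HasDerivAt (fun y : ℝ => (1 + y) ^ (q - 1)) (1 * (q - 1) * (1 + x) ^ (q - 1 - 1)) x :=
      HasDerivAt.rpow_const (by simpa using (hasDerivAt_id x).const_add 1) (Or.inl h1.ne')
    have d2 : HasDerivAt (fun y : ℝ => (1 - y) ^ (q - 1)) (-1 * (q - 1) * (1 - x) ^ (q - 1 - 1)) x :=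
      HasDerivAt.rpow_const (by simpa using (hasDerivAt_id x).const_sub 1) (Or.inl h2.ne')
    have d3 : HasDerivAt (fun y : ℝ => 2 * (q - 1) * y) (2 * (q - 1)) x := by
      simpa using (hasDerivAt_id x).const_mul (2 * (q - 1))
    have e : q - 1 - 1 = q - 2 := by ring
    rw [e] at d1 d2
    refine ((d1.sub d2).sub d3).congr_deriv ?_
    ring
  have hmono : MonotoneOn φ (Ico (0:ℝ) 1) := by
    apply monotoneOn_of_deriv_nonneg (convex_Ico 0 1)
    · exact fun x hx => ((hderiv x hx).continuousAt).continuousWithinAt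
    · rw [interior_Ico]
      exact fun x hx => ((hderiv x (Ioo_subset_Ico_self hx)).differentiableAt).differentiableWithinAt
    · rw [interior_Ico]
      intro x hx
      rw [(hderiv x (Ioo_subset_Ico_self hx)).deriv]
      have := aux_two_le (p := q - 2) (by linarith) hx.1.le hx.2
      have hq : 0 ≤ q - 1 := by linarith
      nlinarith
  have h0 : φ 0 = 0 := by simp [hφ]
  have := hmono (show (0:ℝ) ∈ Ico (0:ℝ) 1 by constructor <;> norm_num)
    (show t ∈ Ico (0:ℝ) 1 from ⟨ht0, ht1⟩) ht0
  rw [h0] at this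
  simp only [hφ] at this
  linarith

/-- Second-order Taylor bound: `(1+t)^q + (1-t)^q ≥ 2 + q(q-1)t²` on `[0,1]`. -/
lemma scalar_taylor {q : ℝ} (hq1 : 1 < q) (hq2 : q ≤ 2) {t : ℝ} (ht0 : 0 ≤ t) (ht1 : t ≤ 1) :
    2 + q * (q - 1) * t ^ 2 ≤ (1 + t) ^ q + (1 - t) ^ q := by
  have main : ∀ x : ℝ, 0 ≤ x → x < 1 → 2 + q * (q - 1) * x ^ 2 ≤ (1 + x) ^ q + (1 - x) ^ q := by
    intro x hx0 hx1
    set g : ℝ → ℝ := fun t => (1 + t) ^ q + (1 - t) ^ q - 2 - q * (q - 1) * t ^ 2 with hg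
    have hderiv : ∀ y ∈ Ico (0:ℝ) 1,
        HasDerivAt g (q * ((1 + y) ^ (q - 1) - (1 - y) ^ (q - 1) - 2 * (q - 1) * y)) y := by
      intro y hy
      have h1 : (0:ℝ) < 1 + y := by linarith [hy.1]
      have h2 : (0:ℝ) < 1 - y := by linarith [hy.2]
      have d1 : HasDerivAt (fun z : ℝ => (1 + z) ^ q) (1 * q * (1 + y) ^ (q - 1)) y :=
        HasDerivAt.rpow_const (by simpa using (hasDerivAt_id y).const_add 1) (Or.inl h1.ne')
      have d2 : HasDerivAt (fun z : ℝ => (1 - z) ^ q) (-1 * q * (1 - y) ^ (q - 1)) y :=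
        HasDerivAt.rpow_const (by simpa using (hasDerivAt_id y).const_sub 1) (Or.inl h2.ne')
      have d3 : HasDerivAt (fun z : ℝ => q * (q - 1) * z ^ 2) (q * (q - 1) * (2 * y)) y := by
        simpa using (hasDerivAt_pow 2 y).const_mul (q * (q - 1))
      have d4 : HasDerivAt (fun z : ℝ => (1 + z) ^ q + (1 - z) ^ q - 2)
          (1 * q * (1 + y) ^ (q - 1) + -1 * q * (1 - y) ^ (q - 1)) y := (d1.add d2).sub_const 2
      refine (d4.sub d3).congr_deriv ?_
      ring
    have hmono : MonotoneOn g (Ico (0:ℝ) 1) := by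
      apply monotoneOn_of_deriv_nonneg (convex_Ico 0 1)
      · exact fun z hz => ((hderiv z hz).continuousAt).continuousWithinAt
      · rw [interior_Ico]
        exact fun z hz =>
          ((hderiv z (Ioo_subset_Ico_self hz)).differentiableAt).differentiableWithinAt
      · rw [interior_Ico]
        intro z hz
        rw [(hderiv z (Ioo_subset_Ico_self hz)).deriv]
        have := aux_phi hq1 hq2 hz.1.le hz.2
        nlinarith
    have h0 : g 0 = 0 := by norm_num [hg]
    have := hmono (show (0:ℝ) ∈ Ico (0:ℝ) 1 by constructor <;> norm_num) ⟨hx0, hx1⟩ hx0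
    rw [h0] at this
    simp only [hg] at this
    linarith
  rcases lt_or_eq_of_le ht1 with h | rfl
  · exact main t ht0 h
  · -- t = 1 : by continuity from the left
    have hc : ContinuousAt (fun x : ℝ => (1 + x) ^ q + (1 - x) ^ q - (2 + q * (q - 1) * x ^ 2)) 1 := by
      have hin1 : ContinuousAt (fun x : ℝ => 1 + x) 1 := by fun_prop
      have hin2 : ContinuousAt (fun x : ℝ => 1 - x) 1 := by fun_prop
      have c1 : ContinuousAt (fun x : ℝ => (1 + x) ^ q) 1 :=
        (Real.continuousAt_rpow_const ((1:ℝ) + 1) q (Or.inl (by norm_num))).comp hin1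
      have c2 : ContinuousAt (fun x : ℝ => (1 - x) ^ q) 1 :=
        (Real.continuousAt_rpow_const ((1:ℝ) - 1) q (Or.inr (by linarith))).comp hin2
      exact (c1.add c2).sub (by fun_prop)
    have hlim : Tendsto (fun x : ℝ => (1 + x) ^ q + (1 - x) ^ q - (2 + q * (q - 1) * x ^ 2))
        (nhdsWithin 1 (Iio 1)) (nhds ((1 + 1) ^ q + (1 - 1) ^ q - (2 + q * (q - 1) * 1 ^ 2))) := by
      exact hc.continuousWithinAt.tendsto
    have hev : ∀ᶠ x in nhdsWithin (1:ℝ) (Iio 1),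
        0 ≤ (1 + x) ^ q + (1 - x) ^ q - (2 + q * (q - 1) * x ^ 2) := by
      filter_upwards [Ioo_mem_nhdsLT_of_mem (show (1:ℝ) ∈ Ioc (0:ℝ) 1 by norm_num)] with x hx
      have := main x hx.1.le hx.2
      linarith
    have := ge_of_tendsto hlim hev
    linarith

/-- core case `0 ≤ b ≤ a`. -/
lemma twopoint_core {q : ℝ} (hq1 : 1 < q) (hq2 : q ≤ 2) {a b : ℝ} (hb : 0 ≤ b) (hba : b ≤ a) :
    2 * (a ^ 2 + (q - 1) * b ^ 2) ^ (q / 2) ≤ (a + b) ^ q + (a - b) ^ q := by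
  have ha : 0 ≤ a := hb.trans hba
  rcases eq_or_lt_of_le ha with rfl | hapos
  · have hb0 : b = 0 := le_antisymm hba hb
    subst hb0
    rw [show (0:ℝ)^2 + (q-1)*(0:ℝ)^2 = 0 by ring, Real.zero_rpow (by positivity : q/2 ≠ 0)]
    norm_num [Real.zero_rpow (by positivity : q ≠ 0)]
  · set t : ℝ := b / a with htdef
    have ht0 : 0 ≤ t := div_nonneg hb hapos.le
    have ht1 : t ≤ 1 := (div_le_one hapos).mpr hba
    have haq : 0 < a ^ q := Real.rpow_pos_of_pos hapos q
    have e0 : a ^ 2 + (q - 1) * b ^ 2 = a ^ 2 * (1 + (q - 1) * t ^ 2) := by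
      rw [htdef]; field_simp
    have e1 : (a ^ 2 + (q - 1) * b ^ 2) ^ (q / 2) = a ^ q * (1 + (q - 1) * t ^ 2) ^ (q / 2) := by
      rw [e0, Real.mul_rpow (by positivity) (by nlinarith [sq_nonneg t])]
      congr 1
      rw [← Real.rpow_natCast a 2, ← Real.rpow_mul hapos.le, show (2:ℕ) * (q / 2) = q by push_cast; ring]
    have e2 : (a + b) ^ q = a ^ q * (1 + t) ^ q := by
      rw [← Real.mul_rpow hapos.le (by linarith)]
      congr 1
      rw [htdef]; field_simp
    have e3 : (a - b) ^ q = a ^ q * (1 - t) ^ q := by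
      rw [← Real.mul_rpow hapos.le (by linarith)]
      congr 1
      rw [htdef]; field_simp
    have hbern : (1 + (q - 1) * t ^ 2) ^ (q / 2) ≤ 1 + (q / 2) * ((q - 1) * t ^ 2) :=
      rpow_one_add_le_one_add_mul_self (by nlinarith [sq_nonneg t]) (by positivity)
        (by linarith)
    have htay := scalar_taylor hq1 hq2 ht0 ht1
    rw [e1, e2, e3]
    calc 2 * (a ^ q * (1 + (q - 1) * t ^ 2) ^ (q / 2))
        ≤ a ^ q * (2 + q * (q - 1) * t ^ 2) := by nlinarith
      _ ≤ a ^ q * ((1 + t) ^ q + (1 - t) ^ q) := by nlinarith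
      _ = a ^ q * (1 + t) ^ q + a ^ q * (1 - t) ^ q := by ring

/-- nonneg case. -/
lemma twopoint_nonneg {q : ℝ} (hq1 : 1 < q) (hq2 : q ≤ 2) {a b : ℝ} (ha : 0 ≤ a) (hb : 0 ≤ b) :
    2 * (a ^ 2 + (q - 1) * b ^ 2) ^ (q / 2) ≤ (a + b) ^ q + |a - b| ^ q := by
  rcases le_total b a with h | h
  · rw [abs_of_nonneg (by linarith)]
    exact twopoint_core hq1 hq2 hb h
  · have := twopoint_core hq1 hq2 ha h
    rw [abs_of_nonpos (by linarith), neg_sub, add_comm a b]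
    have hmon : (a ^ 2 + (q - 1) * b ^ 2) ^ (q / 2) ≤ (b ^ 2 + (q - 1) * a ^ 2) ^ (q / 2) := by
      have h1 : (0:ℝ) ≤ 2 - q := by linarith
      have h2 : (0:ℝ) ≤ b ^ 2 - a ^ 2 := by nlinarith
      have h3 := mul_nonneg h1 h2
      apply Real.rpow_le_rpow (by nlinarith [sq_nonneg a, sq_nonneg b]) (by nlinarith) (by positivity)
    linarith

/-- scalar two-point inequality. -/
lemma twopoint {q : ℝ} (hq1 : 1 < q) (hq2 : q ≤ 2) (a b : ℝ) :
    2 * (a ^ 2 + (q - 1) * b ^ 2) ^ (q / 2) ≤ |a + b| ^ q + |a - b| ^ q := by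
  have key : |a + b| ^ q + |a - b| ^ q = (|a| + |b|) ^ q + |(|a| - |b|)| ^ q := by
    rcases le_total 0 a with ha | ha <;> rcases le_total 0 b with hb | hb
    · rw [abs_of_nonneg ha, abs_of_nonneg hb, abs_of_nonneg (show (0:ℝ) ≤ a + b by linarith)]
    · rw [abs_of_nonneg ha, abs_of_nonpos hb,
        abs_of_nonneg (show (0:ℝ) ≤ a - b by linarith),
        show a + -b = a - b by ring, show a - -b = a + b by ring]
      ring
    · rw [abs_of_nonpos ha, abs_of_nonneg hb,
        abs_of_nonpos (show a - b ≤ 0 by linarith),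
        show -a - b = -(a + b) by ring, abs_neg, show -(a - b) = -a + b by ring]
      ring
    · rw [abs_of_nonpos ha, abs_of_nonpos hb,
        abs_of_nonpos (show a + b ≤ 0 by linarith),
        show -a - -b = -(a - b) by ring, abs_neg, show -(a + b) = -a + -b by ring]
  rw [key, ← sq_abs a, ← sq_abs b]
  exact twopoint_nonneg hq1 hq2 (abs_nonneg a) (abs_nonneg b)

/-- Reverse Minkowski-type superadditivity for exponent `s ≤ 1`. -/
lemma rev_mink {s : ℝ} (hs0 : 0 < s) (hs1 : s ≤ 1) {d : ℕ} (A B : Fin d → ℝ)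
    (hA : ∀ i, 0 ≤ A i) (hB : ∀ i, 0 ≤ B i) :
    (∑ i, (A i) ^ s) ^ (1/s) + (∑ i, (B i) ^ s) ^ (1/s)
      ≤ (∑ i, (A i + B i) ^ s) ^ (1/s) := by
  set SA := ∑ i, (A i) ^ s with hSA
  set SB := ∑ i, (B i) ^ s with hSB
  have hSAnn : 0 ≤ SA := Finset.sum_nonneg fun i _ => Real.rpow_nonneg (hA i) s
  have hSBnn : 0 ≤ SB := Finset.sum_nonneg fun i _ => Real.rpow_nonneg (hB i) s
  by_cases hA0 : SA = 0
  · have hAz : ∀ i, A i = 0 := by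
      intro i
      have hz := (Finset.sum_eq_zero_iff_of_nonneg
        (fun j _ => Real.rpow_nonneg (hA j) s)).mp hA0 i (Finset.mem_univ i)
      exact ((Real.rpow_eq_zero_iff_of_nonneg (hA i)).mp hz).1
    rw [hA0, Real.zero_rpow (by positivity : (1:ℝ)/s ≠ 0), zero_add]
    apply Real.rpow_le_rpow hSBnn _ (by positivity)
    apply Finset.sum_le_sum
    intro i _
    rw [hAz i, zero_add]
  by_cases hB0 : SB = 0
  · have hBz : ∀ i, B i = 0 := by
      intro i
      have hz := (Finset.sum_eq_zero_iff_of_nonneg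
        (fun j _ => Real.rpow_nonneg (hB j) s)).mp hB0 i (Finset.mem_univ i)
      exact ((Real.rpow_eq_zero_iff_of_nonneg (hB i)).mp hz).1
    rw [hB0, Real.zero_rpow (by positivity : (1:ℝ)/s ≠ 0), add_zero]
    apply Real.rpow_le_rpow hSAnn _ (by positivity)
    apply Finset.sum_le_sum
    intro i _
    rw [hBz i, add_zero]
  have hSApos : 0 < SA := lt_of_le_of_ne hSAnn (Ne.symm hA0)
  have hSBpos : 0 < SB := lt_of_le_of_ne hSBnn (Ne.symm hB0)
  set α := SA ^ (1/s) with hα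
  set β := SB ^ (1/s) with hβ
  have hαpos : 0 < α := Real.rpow_pos_of_pos hSApos _
  have hβpos : 0 < β := Real.rpow_pos_of_pos hSBpos _
  have hαβ : 0 < α + β := by linarith
  set lam := α / (α + β) with hlam
  have hlampos : 0 < lam := div_pos hαpos hαβ
  have h1lam : 1 - lam = β / (α + β) := by
    rw [hlam]; field_simp; ring
  have h1lampos : 0 < 1 - lam := by rw [h1lam]; positivity
  have hpt : ∀ i, lam ^ (1 - s) * (A i) ^ s + (1 - lam) ^ (1 - s) * (B i) ^ s
      ≤ (A i + B i) ^ s := by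
    intro i
    have hcon := (Real.concaveOn_rpow hs0.le hs1).2
      (show A i / lam ∈ Ici (0:ℝ) from div_nonneg (hA i) hlampos.le)
      (show B i / (1 - lam) ∈ Ici (0:ℝ) from div_nonneg (hB i) h1lampos.le)
      hlampos.le h1lampos.le (by ring)
    simp only [smul_eq_mul] at hcon
    have e1 : lam * (A i / lam) + (1 - lam) * (B i / (1 - lam)) = A i + B i := by
      field_simp
    rw [e1] at hcon
    have e2 : lam * (A i / lam) ^ s = lam ^ (1 - s) * (A i) ^ s := by
      rw [Real.div_rpow (hA i) hlampos.le, Real.rpow_sub hlampos, Real.rpow_one]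
      field_simp
    have e3 : (1 - lam) * (B i / (1 - lam)) ^ s = (1 - lam) ^ (1 - s) * (B i) ^ s := by
      rw [Real.div_rpow (hB i) h1lampos.le, Real.rpow_sub h1lampos, Real.rpow_one]
      field_simp
    rw [e2, e3] at hcon
    exact hcon
  have hsum : lam ^ (1 - s) * SA + (1 - lam) ^ (1 - s) * SB ≤ ∑ i, (A i + B i) ^ s := by
    rw [hSA, hSB, Finset.mul_sum, Finset.mul_sum, ← Finset.sum_add_distrib]
    exact Finset.sum_le_sum fun i _ => hpt i
  have hSAs : α ^ s = SA := by
    rw [hα, ← Real.rpow_mul hSAnn, one_div_mul_cancel hs0.ne', Real.rpow_one]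
  have hSBs : β ^ s = SB := by
    rw [hβ, ← Real.rpow_mul hSBnn, one_div_mul_cancel hs0.ne', Real.rpow_one]
  have e4 : lam ^ (1 - s) * SA = α / (α + β) ^ (1 - s) := by
    rw [← hSAs, hlam, Real.div_rpow hαpos.le hαβ.le, div_mul_eq_mul_div,
      ← Real.rpow_add hαpos, sub_add_cancel, Real.rpow_one]
  have e5 : (1 - lam) ^ (1 - s) * SB = β / (α + β) ^ (1 - s) := by
    rw [← hSBs, h1lam, Real.div_rpow hβpos.le hαβ.le, div_mul_eq_mul_div,
      ← Real.rpow_add hβpos, sub_add_cancel, Real.rpow_one]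
  have e6 : α / (α + β) ^ (1 - s) + β / (α + β) ^ (1 - s) = (α + β) ^ s := by
    rw [← add_div, div_eq_iff (ne_of_gt (Real.rpow_pos_of_pos hαβ (1 - s))),
      ← Real.rpow_add hαβ]
    norm_num
  have hmain : (α + β) ^ s ≤ ∑ i, (A i + B i) ^ s := by
    rw [← e6, ← e4, ← e5]; exact hsum
  have hfin := Real.rpow_le_rpow (Real.rpow_nonneg hαβ.le s) hmain
    (by positivity : (0:ℝ) ≤ 1/s)
  rwa [← Real.rpow_mul hαβ.le, mul_one_div_cancel hs0.ne', Real.rpow_one] at hfin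

/-- Ball–Carlen–Lieb type midpoint strong convexity of `‖·‖_q²`. -/
lemma bcl {q : ℝ} (hq1 : 1 < q) (hq2 : q ≤ 2) {d : ℕ} (x y : Fin d → ℝ) :
    (∑ i, |(x i + y i)/2| ^ q) ^ (2/q) + (q - 1) * (∑ i, |(x i - y i)/2| ^ q) ^ (2/q)
      ≤ ((∑ i, |x i| ^ q) ^ (2/q) + (∑ i, |y i| ^ q) ^ (2/q)) / 2 := by
  have hq0 : 0 < q := by linarith
  set u : Fin d → ℝ := fun i => (x i + y i)/2 with hu
  set v : Fin d → ℝ := fun i => (x i - y i)/2 with hv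
  set s : ℝ := q / 2 with hs
  have hs0 : 0 < s := by rw [hs]; positivity
  have hs1 : s ≤ 1 := by rw [hs]; linarith
  have hinv : 1/s = 2/q := by rw [hs]; field_simp
  -- Step 1: reverse Minkowski with A i = u i ^ 2, B i = (q-1) * v i ^ 2
  have hrm := rev_mink hs0 hs1 (fun i => (u i)^2) (fun i => (q-1) * (v i)^2)
    (fun i => sq_nonneg _) (fun i => mul_nonneg (by linarith) (sq_nonneg _))
  have eA : ∀ i : Fin d, ((u i)^2) ^ s = |u i| ^ q := by
    intro i
    rw [← sq_abs, ← Real.rpow_natCast |u i| 2, ← Real.rpow_mul (abs_nonneg _)]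
    norm_num [hs]
    ring_nf
  have eB : ∀ i : Fin d, ((q-1) * (v i)^2) ^ s = (q-1)^s * |v i| ^ q := by
    intro i
    rw [Real.mul_rpow (by linarith) (sq_nonneg _)]
    congr 1
    rw [← sq_abs, ← Real.rpow_natCast |v i| 2, ← Real.rpow_mul (abs_nonneg _)]
    norm_num [hs]
    ring_nf
  simp only [eA, eB] at hrm
  rw [← Finset.mul_sum] at hrm
  have hsumv : (0:ℝ) ≤ ∑ i, |v i| ^ q :=
    Finset.sum_nonneg fun i _ => Real.rpow_nonneg (abs_nonneg _) q
  have eC : ((q-1)^s * ∑ i, |v i| ^ q) ^ (1/s) = (q-1) * (∑ i, |v i| ^ q) ^ (1/s) := by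
    rw [Real.mul_rpow (Real.rpow_nonneg (by linarith) s) hsumv]
    congr 1
    rw [← Real.rpow_mul (by linarith : (0:ℝ) ≤ q - 1), mul_one_div_cancel hs0.ne',
      Real.rpow_one]
  rw [eC, hinv] at hrm
  -- Step 2: pointwise two-point inequality
  have hpt : ∀ i : Fin d, ((u i)^2 + (q-1) * (v i)^2) ^ s ≤ (|x i| ^ q + |y i| ^ q) / 2 := by
    intro i
    have := twopoint hq1 hq2 (u i) (v i)
    have e1 : u i + v i = x i := by rw [hu, hv]; ring
    have e2 : u i - v i = y i := by rw [hu, hv]; ring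
    rw [e1, e2] at this
    rw [hs]
    linarith
  have hstep2 : ∑ i, ((u i)^2 + (q-1) * (v i)^2) ^ s
      ≤ ((∑ i, |x i| ^ q) + ∑ i, |y i| ^ q) / 2 := by
    calc ∑ i, ((u i)^2 + (q-1) * (v i)^2) ^ s
        ≤ ∑ i, (|x i| ^ q + |y i| ^ q) / 2 := Finset.sum_le_sum fun i _ => hpt i
      _ = ((∑ i, |x i| ^ q) + ∑ i, |y i| ^ q) / 2 := by
          rw [← Finset.sum_add_distrib, Finset.sum_div]
  -- Step 3: monotonicity of rpow
  have hsum3 : (0:ℝ) ≤ ∑ i, ((u i)^2 + (q-1) * (v i)^2) ^ s :=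
    Finset.sum_nonneg fun i _ => Real.rpow_nonneg (add_nonneg (sq_nonneg _) (mul_nonneg (by linarith) (sq_nonneg _))) s
  have hstep3 : (∑ i, ((u i)^2 + (q-1) * (v i)^2) ^ s) ^ (2/q)
      ≤ (((∑ i, |x i| ^ q) + ∑ i, |y i| ^ q) / 2) ^ (2/q) :=
    Real.rpow_le_rpow hsum3 hstep2 (by positivity)
  -- Step 4: convexity of t ^ (2/q)
  have hSx : (0:ℝ) ≤ ∑ i, |x i| ^ q :=
    Finset.sum_nonneg fun i _ => Real.rpow_nonneg (abs_nonneg _) q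
  have hSy : (0:ℝ) ≤ ∑ i, |y i| ^ q :=
    Finset.sum_nonneg fun i _ => Real.rpow_nonneg (abs_nonneg _) q
  have hconv := (convexOn_rpow (show (1:ℝ) ≤ 2/q by
    rw [le_div_iff₀ hq0]; linarith)).2 (Set.mem_Ici.mpr hSx) (Set.mem_Ici.mpr hSy)
    (by norm_num : (0:ℝ) ≤ 1/2) (by norm_num : (0:ℝ) ≤ 1/2) (by norm_num)
  simp only [smul_eq_mul] at hconv
  have hstep4 : (((∑ i, |x i| ^ q) + ∑ i, |y i| ^ q) / 2) ^ (2/q)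
      ≤ ((∑ i, |x i| ^ q) ^ (2/q) + (∑ i, |y i| ^ q) ^ (2/q)) / 2 := by
    have e : (1:ℝ)/2 * (∑ i, |x i| ^ q) + 1/2 * (∑ i, |y i| ^ q)
        = ((∑ i, |x i| ^ q) + ∑ i, |y i| ^ q) / 2 := by ring
    rw [e] at hconv
    linarith
  calc (∑ i, |u i| ^ q) ^ (2/q) + (q - 1) * (∑ i, |v i| ^ q) ^ (2/q)
      ≤ (∑ i, ((u i)^2 + (q-1) * (v i)^2) ^ s) ^ (2/q) := hrm
    _ ≤ (((∑ i, |x i| ^ q) + ∑ i, |y i| ^ q) / 2) ^ (2/q) := hstep3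
    _ ≤ ((∑ i, |x i| ^ q) ^ (2/q) + (∑ i, |y i| ^ q) ^ (2/q)) / 2 := hstep4

theorem stmt2 (d : ℕ) (q : ℝ) (hq1 : 1 < q) (hq2 : q ≤ 2)
    (Δ Δs D : EuclideanSpace ℝ (Fin d))
    (hD : HasGradientAt
      (fun x : EuclideanSpace ℝ (Fin d) => (∑ i, |x i| ^ q) ^ (2 / q)) D Δs) :
    (∑ i, |Δs i| ^ q) ^ (2 / q) + ⟪D, Δ - Δs⟫ +
        (q - 1) * (∑ i, |(Δ - Δs) i| ^ q) ^ (2 / q)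
      ≤ (∑ i, |Δ i| ^ q) ^ (2 / q) := by
  set ξ : EuclideanSpace ℝ (Fin d) := Δ - Δs with hξ
  set c : ℝ := ⟪D, Δ - Δs⟫ with hc
  set nξ : ℝ := (∑ i, |Δ i - Δs i| ^ q) ^ (2/q) with hnξ
  set G : ℝ → ℝ := fun t => (∑ i, |Δs i + t * (Δ i - Δs i)| ^ q) ^ (2/q) with hG
  -- derivative of G at 0 is c
  have hγ : HasDerivAt (fun t : ℝ => Δs + t • ξ) ξ 0 := by
    simpa using ((hasDerivAt_id (0:ℝ)).smul_const ξ).const_add Δs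
  have hγ0 : Δs + (0:ℝ) • ξ = Δs := by simp
  have hfd := hD.hasFDerivAt
  rw [← hγ0] at hfd
  have hcomp := hfd.comp_hasDerivAt 0 hγ
  have hGd : HasDerivAt G c 0 := by
    have hfun : ((fun x : EuclideanSpace ℝ (Fin d) => (∑ i, |x i| ^ q) ^ (2 / q)) ∘
        (fun t : ℝ => Δs + t • ξ)) = G := by
      funext t
      simp only [Function.comp_apply, hG, hξ, PiLp.add_apply, PiLp.smul_apply,
        PiLp.sub_apply, smul_eq_mul]
    rw [hfun] at hcomp
    have hval : (InnerProductSpace.toDual ℝ (EuclideanSpace ℝ (Fin d)) D) ξ = c := by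
      rw [InnerProductSpace.toDual_apply_apply, hc, hξ]
    rwa [hval] at hcomp
  -- midpoint strong convexity of G
  have hGmid : ∀ a b : ℝ, G ((a+b)/2) + (q-1) * ((a-b)/2)^2 * nξ ≤ (G a + G b)/2 := by
    intro a b
    have hb := bcl hq1 hq2 (fun i => Δs i + a * (Δ i - Δs i)) (fun i => Δs i + b * (Δ i - Δs i))
    have e1 : ∀ i, ((Δs i + a * (Δ i - Δs i)) + (Δs i + b * (Δ i - Δs i)))/2
        = Δs i + ((a+b)/2) * (Δ i - Δs i) := fun i => by ring
    have e2 : ∀ i, ((Δs i + a * (Δ i - Δs i)) - (Δs i + b * (Δ i - Δs i)))/2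
        = ((a-b)/2) * (Δ i - Δs i) := fun i => by ring
    simp only [e1, e2] at hb
    have e3 : (∑ i, |((a-b)/2) * (Δ i - Δs i)| ^ q) ^ (2/q) = ((a-b)/2)^2 * nξ := by
      have : ∀ i : Fin d, |((a-b)/2) * (Δ i - Δs i)| ^ q
          = |(a-b)/2| ^ q * |Δ i - Δs i| ^ q := fun i => by
        rw [abs_mul, Real.mul_rpow (abs_nonneg _) (abs_nonneg _)]
      simp only [this]
      rw [← Finset.mul_sum, Real.mul_rpow (Real.rpow_nonneg (abs_nonneg _) q)
        (Finset.sum_nonneg fun i _ => Real.rpow_nonneg (abs_nonneg _) q), hnξ]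
      congr 1
      rw [← Real.rpow_mul (abs_nonneg _),
        show q * (2/q) = ((2:ℕ):ℝ) by push_cast; field_simp,
        Real.rpow_natCast, sq_abs]
    rw [e3] at hb
    simp only [hG]
    linarith [hb]
  -- the auxiliary function h
  set h : ℝ → ℝ := fun t => G t - c * t - (q-1) * t^2 * nξ with hh
  have hmid : ∀ a b : ℝ, h ((a+b)/2) ≤ (h a + h b)/2 := by
    intro a b
    simp only [hh]
    nlinarith [hGmid a b]
  have hhd : HasDerivAt h 0 0 := by
    have d1 : HasDerivAt (fun t : ℝ => c * t) c 0 := by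
      simpa using (hasDerivAt_id (0:ℝ)).const_mul c
    have d2 : HasDerivAt (fun t : ℝ => (q-1) * t^2 * nξ) 0 0 := by
      have := ((hasDerivAt_pow 2 (0:ℝ)).const_mul (q-1)).mul_const nξ
      simpa using this
    have := (hGd.sub d1).sub d2
    exact this.congr_deriv (by ring)
  -- dyadic iteration
  have ind : ∀ n : ℕ, (h ((2⁻¹:ℝ)^n) - h 0) * 2^n ≤ h 1 - h 0 := by
    intro n
    induction n with
    | zero => simp
    | succ n ih =>
      have hm := hmid 0 ((2⁻¹:ℝ)^n)
      have e : ((0:ℝ) + (2⁻¹:ℝ)^n)/2 = (2⁻¹:ℝ)^(n+1) := by ring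
      rw [e] at hm
      have h2 : (0:ℝ) < 2^n := by positivity
      have hm2 := mul_le_mul_of_nonneg_right hm (le_of_lt h2)
      rw [show ((2:ℝ)^(n+1)) = 2^n * 2 from pow_succ 2 n]
      nlinarith [hm2, ih]
  -- limit of slopes
  have hslope := hasDerivAt_iff_tendsto_slope.mp hhd
  have hu : Tendsto (fun n : ℕ => (2⁻¹:ℝ)^n) atTop (nhdsWithin 0 {0}ᶜ) := by
    rw [tendsto_nhdsWithin_iff]
    constructor
    · exact tendsto_pow_atTop_nhds_zero_of_lt_one (by norm_num) (by norm_num)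
    · exact Eventually.of_forall fun n => by
        simp only [Set.mem_compl_iff, Set.mem_singleton_iff]
        positivity
  have hcompose := hslope.comp hu
  have hrw : (fun n : ℕ => slope h 0 ((2⁻¹:ℝ)^n))
      = fun n : ℕ => (h ((2⁻¹:ℝ)^n) - h 0) * 2^n := by
    funext n
    rw [slope_def_field]
    field_simp
    rw [sub_zero, mul_assoc, ← mul_pow]
    norm_num
  rw [show (slope h 0 ∘ fun n : ℕ => (2⁻¹:ℝ)^n) = fun n : ℕ => slope h 0 ((2⁻¹:ℝ)^n) from rfl,
    hrw] at hcompose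
  have hfinal : (0:ℝ) ≤ h 1 - h 0 :=
    le_of_tendsto hcompose (Eventually.of_forall ind)
  -- unfold h 0, h 1
  have e1 : ∀ i : Fin d, Δs i + 1 * (Δ i - Δs i) = Δ i := fun i => by ring
  have e0 : ∀ i : Fin d, Δs i + 0 * (Δ i - Δs i) = Δs i := fun i => by ring
  have hG1 : G 1 = (∑ i, |Δ i| ^ q) ^ (2/q) := by
    simp only [hG, e1]
  have hG0 : G 0 = (∑ i, |Δs i| ^ q) ^ (2/q) := by
    simp only [hG, e0]
  simp only [hh, hG1, hG0] at hfinal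
  have hsub : (∑ i, |ξ i| ^ q) ^ ((2:ℝ)/q) = nξ := by
    rw [hnξ]
    congr 1
  rw [hsub]
  linarith
end

section
/- Let a, b > 0, c ≥ 0, and ε > 0, and define g(λ) = aλ + b/λ + cε/λ² for λ > 0. Then for all sufficiently small ε > 0, |inf_{λ>0} g(λ) − 2√(ab) − ε a c / b| ≤ ε² c² a^{3/2} b^{−5/2}, and the infimum is attained at some λ ≥ √(b/a). -/
lemma key1 (x u : ℝ) (hx : 0 < x) (hu0 : 0 ≤ u) (hu8 : u ≤ 1/8) :
    2 + u - u^2 ≤ x + 1/x + u/x^2 := by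
  rw [← sub_nonneg]
  have h : x + 1/x + u/x^2 - (2+u-u^2)
      = (x*(x-1)^2 - u*(x-1)*(x+1) + u^2*x^2)/x^2 := by
    field_simp; ring
  rw [h]
  apply div_nonneg _ (sq_nonneg x)
  rcases le_or_gt x 1 with h1 | h1
  · nlinarith [mul_nonneg hx.le (sq_nonneg (x-1)), sq_nonneg (u*x),
      mul_nonneg (mul_nonneg hu0 (by linarith : (0:ℝ) ≤ 1-x)) (by linarith : (0:ℝ) ≤ x+1)]
  · have hA : (0:ℝ) < 1 - u + u^2 := by nlinarith
    have hs3 : (0:ℝ) ≤ (x-1)^3 := pow_nonneg (by linarith) 3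
    nlinarith [sq_nonneg ((1-u+u^2)*(x-1) - u*(1-u)), mul_nonneg hA.le hs3,
      pow_nonneg hu0 3]

lemma key2 (x u : ℝ) (hx : 0 < x) (hx1 : x ≤ 1) (hu0 : 0 ≤ u) :
    2 + u ≤ x + 1/x + u/x^2 := by
  rw [← sub_nonneg]
  have h : x + 1/x + u/x^2 - (2+u)
      = (x*(x-1)^2 + u*(1-x)*(1+x))/x^2 := by
    field_simp; ring
  rw [h]
  apply div_nonneg _ (sq_nonneg x)
  have := mul_nonneg hx.le (sq_nonneg (x-1))
  nlinarith [mul_nonneg (mul_nonneg hu0 (by linarith : (0:ℝ) ≤ 1-x)) (by linarith : (0:ℝ) ≤ 1+x)]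

theorem stmt4 (a b c : ℝ) (ha : 0 < a) (hb : 0 < b) (hc : 0 ≤ c) :
    ∃ ε₀ > 0, ∀ ε : ℝ, 0 < ε → ε < ε₀ →
      |sInf {y : ℝ | ∃ l > 0, y = a * l + b / l + c * ε / l ^ 2}
          - 2 * Real.sqrt (a * b) - ε * a * c / b|
        ≤ ε ^ 2 * c ^ 2 * a ^ ((3 : ℝ) / 2) * b ^ (-(5 : ℝ) / 2) ∧
      ∃ l : ℝ, Real.sqrt (b / a) ≤ l ∧
        IsLeast {y : ℝ | ∃ l' > 0, y = a * l' + b / l' + c * ε / l' ^ 2}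
          (a * l + b / l + c * ε / l ^ 2) := by
  have hsa : 0 < Real.sqrt a := Real.sqrt_pos.2 ha
  have hsb : 0 < Real.sqrt b := Real.sqrt_pos.2 hb
  set sa := Real.sqrt a with hsadef
  set sb := Real.sqrt b with hsbdef
  have ha' : sa^2 = a := Real.sq_sqrt ha.le
  have hb' : sb^2 = b := Real.sq_sqrt hb.le
  refine ⟨sb^3/(8*(c+1)*sa), by positivity, ?_⟩
  intro ε hε hε₀
  set r := sb/sa with hrdef
  have hrpos : 0 < r := by positivity
  set u := c*ε*sa/sb^3 with hudef
  have hu0 : 0 ≤ u := by positivity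
  have hu8 : u ≤ 1/8 := by
    have h1 : c*ε*sa ≤ (c+1)*ε*sa := by nlinarith
    have h2 : (c+1)*ε*sa < (c+1)*(sb^3/(8*(c+1)*sa))*sa := by
      apply mul_lt_mul_of_pos_right _ hsa
      exact mul_lt_mul_of_pos_left hε₀ (by linarith)
    have h3 : (c+1)*(sb^3/(8*(c+1)*sa))*sa = sb^3/8 := by
      field_simp
    rw [hudef, div_le_iff₀ (by positivity)]
    nlinarith
  set K := sa*sb with hKdef
  have hK : 0 < K := by positivity
  -- the function value identity
  have hgl : ∀ l : ℝ, 0 < l →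
      a*l + b/l + c*ε/l^2 = K*((l/r) + 1/(l/r) + u/(l/r)^2) := by
    intro l hl
    rw [← ha', ← hb', hKdef, hudef, hrdef]
    have h1 : sa ≠ 0 := hsa.ne'
    have h2 : sb ≠ 0 := hsb.ne'
    have h3 : l ≠ 0 := hl.ne'
    field_simp
  have hgr : a*r + b/r + c*ε/r^2 = K*(2 + u) := by
    rw [← ha', ← hb', hKdef, hudef, hrdef]
    have h1 : sa ≠ 0 := hsa.ne'
    have h2 : sb ≠ 0 := hsb.ne'
    field_simp
    ring
  -- lower bounds
  have low1 : ∀ l : ℝ, 0 < l → K*(2 + u - u^2) ≤ a*l + b/l + c*ε/l^2 := by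
    intro l hl
    rw [hgl l hl]
    exact mul_le_mul_of_nonneg_left (key1 (l/r) u (by positivity) hu0 hu8) hK.le
  have low2 : ∀ l : ℝ, 0 < l → l ≤ r → K*(2+u) ≤ a*l + b/l + c*ε/l^2 := by
    intro l hl hlr
    rw [hgl l hl]
    exact mul_le_mul_of_nonneg_left
      (key2 (l/r) u (by positivity) ((div_le_one hrpos).2 hlr) hu0) hK.le
  -- minimizer on a compact interval
  set M := 3*r + c*ε/(a*r^2) with hMdef
  have hMr : r ≤ M := by
    have h0 : 0 ≤ c*ε/(a*r^2) := by positivity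
    rw [hMdef]
    linarith
  have hcont : ContinuousOn (fun l : ℝ => a*l + b/l + c*ε/l^2) (Set.Icc r M) := by
    have hne : ∀ t ∈ Set.Icc r M, t ≠ 0 := fun t ht => (lt_of_lt_of_le hrpos ht.1).ne'
    apply ContinuousOn.add
    apply ContinuousOn.add
    · exact (continuous_const.mul continuous_id).continuousOn
    · exact continuousOn_const.div continuousOn_id hne
    · exact continuousOn_const.div ((continuous_pow 2).continuousOn)
        (fun t ht => pow_ne_zero 2 (hne t ht))
  obtain ⟨l₀, hl₀mem, hl₀min'⟩ := isCompact_Icc.exists_isMinOn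
    (Set.nonempty_Icc.2 hMr) hcont
  have hl₀min : ∀ t ∈ Set.Icc r M, a*l₀ + b/l₀ + c*ε/l₀^2 ≤ a*t + b/t + c*ε/t^2 :=
    fun t ht => hl₀min' ht
  have hl₀pos : 0 < l₀ := lt_of_lt_of_le hrpos hl₀mem.1
  have hgr_ge : a*l₀ + b/l₀ + c*ε/l₀^2 ≤ K*(2+u) := by
    rw [← hgr]
    exact hl₀min r (Set.left_mem_Icc.2 hMr)
  -- global minimality
  have hglob : ∀ l : ℝ, 0 < l →
      a*l₀ + b/l₀ + c*ε/l₀^2 ≤ a*l + b/l + c*ε/l^2 := by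
    intro l hl
    rcases le_or_gt l r with hlr | hlr
    · calc a*l₀ + b/l₀ + c*ε/l₀^2 ≤ K*(2+u) := hgr_ge
        _ ≤ a*l + b/l + c*ε/l^2 := low2 l hl hlr
    rcases le_or_gt l M with hlM | hlM
    · exact hl₀min l ⟨hlr.le, hlM⟩
    · have h1 : a*M ≤ a*l := mul_le_mul_of_nonneg_left hlM.le ha.le
      have h2 : K*(2+u) ≤ a*M := by
        have hcer : c*ε/r^2 = u*K := by
          rw [hudef, hKdef, hrdef]
          field_simp
        have : a*M = 3*(a*r) + c*ε/r^2 := by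
          rw [hMdef]; field_simp
        rw [this, hcer]
        have har : a*r = K := by rw [hKdef, hrdef, ← ha']; field_simp
        rw [har]
        nlinarith
      have h3 : 0 ≤ b/l := by positivity
      have h4 : 0 ≤ c*ε/l^2 := by positivity
      linarith [hgr_ge]
  -- IsLeast
  have hleast : IsLeast {y : ℝ | ∃ l' > 0, y = a * l' + b / l' + c * ε / l' ^ 2}
      (a * l₀ + b / l₀ + c * ε / l₀ ^ 2) := by
    constructor
    · exact ⟨l₀, hl₀pos, rfl⟩
    · rintro y ⟨l, hl, rfl⟩
      exact hglob l hl
  have hinf : sInf {y : ℝ | ∃ l > 0, y = a * l + b / l + c * ε / l ^ 2}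
      = a * l₀ + b / l₀ + c * ε / l₀ ^ 2 := hleast.csInf_eq
  -- rewriting constants
  have h2K : Real.sqrt (a*b) = K := by
    rw [hKdef, hsadef, hsbdef, ← Real.sqrt_mul ha.le]
  have heac : ε*a*c/b = u*K := by
    rw [hudef, hKdef, ← ha', ← hb']
    field_simp
  have h32 : a ^ ((3:ℝ)/2) = sa^3 := by
    rw [show ((3:ℝ)/2) = (1/2)*(3:ℕ) by norm_num, Real.rpow_mul ha.le,
      Real.rpow_natCast, hsadef, ← Real.sqrt_eq_rpow]
  have h52 : b ^ (-(5:ℝ)/2) = (sb^5)⁻¹ := by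
    rw [show (-(5:ℝ)/2) = -((1/2)*(5:ℕ)) by norm_num, Real.rpow_neg hb.le,
      Real.rpow_mul hb.le, Real.rpow_natCast, hsbdef, ← Real.sqrt_eq_rpow]
  have hrhs : ε^2*c^2*a^((3:ℝ)/2)*b^(-(5:ℝ)/2) = u^2*K := by
    rw [h32, h52, hudef, hKdef]
    field_simp
  clear_value sa sb r u K M
  constructor
  · rw [hinf, h2K, heac, hrhs]
    have hlow := low1 l₀ hl₀pos
    have hKu2 : 0 ≤ u^2*K := by positivity
    have e1 : K*(2+u-u^2) = 2*K + u*K - u^2*K := by ring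
    have e2 : K*(2+u) = 2*K + u*K := by ring
    rw [abs_le]
    constructor
    · linarith
    · linarith
  · refine ⟨l₀, ?_, hleast⟩
    have : Real.sqrt (b/a) = r := by
      rw [hrdef, hsadef, hsbdef, ← Real.sqrt_div hb.le]
    rw [this]
    exact hl₀mem.1
end
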